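/- Let z be a point of the unit circle {w ∈ ℂ : |w| = 1} and θ ∈ ℝ. For every n ∈ ℕ, if the set X = {e^{ikθ}·z : k = 0, ..., n}, regarded as a subset of ℂ with the Euclidean metric, has at least two elements, then |NND(X)| ≤ 3. -/

import Mathlib

open Real

namespace ThreeGapAux

noncomputable def ee (θ : ℝ) (m : ℕ) : ℝ := m * θ - 2 * π * round (m * θ / (2 * π))

lemma ee_mem (θ : ℝ) (m : ℕ) : ee θ m ∈ Set.Ico (-π) π := by
  have hpi := Real.pi_pos
  have h2pi : (0:ℝ) < 2 * π := by linarith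
  set x : ℝ := m * θ / (2 * π) with hx
  have h1 : (round x : ℝ) ≤ x + 1/2 := by
    rw [round_eq]; exact_mod_cast Int.floor_le (x + 1/2)
  have h2 : x + 1/2 < (round x : ℝ) + 1 := by
    rw [round_eq]; exact_mod_cast Int.lt_floor_add_one (x + 1/2)
  have hee : ee θ m = 2 * π * (x - round x) := by
    unfold ee; rw [hx]; field_simp
  constructor
  · show -π ≤ ee θ m
    rw [hee]; nlinarith
  · show ee θ m < π
    rw [hee]; nlinarith

lemma ee_spec (θ : ℝ) (m : ℕ) : ∃ k : ℤ, (m:ℝ) * θ = ee θ m + 2 * π * k :=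
  ⟨round ((m:ℝ) * θ / (2 * π)), by unfold ee; ring⟩

lemma abs_ee_le (θ : ℝ) (m : ℕ) : |ee θ m| ≤ π := by
  have h := ee_mem θ m
  rw [abs_le]; exact ⟨h.1, h.2.le⟩

noncomputable def d (θ : ℝ) (m : ℕ) : ℝ := ‖Complex.exp ((m : ℂ) * θ * Complex.I) - 1‖

lemma exp_eq (θ : ℝ) (m : ℕ) :
    Complex.exp ((m : ℂ) * θ * Complex.I) = Complex.exp ((ee θ m : ℂ) * Complex.I) := by
  obtain ⟨k, hk⟩ := ee_spec θ m
  have : ((m : ℂ) * θ * Complex.I) = (ee θ m : ℂ) * Complex.I + k * (2 * π * Complex.I) := by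
    have h2 := congrArg (Complex.ofReal) hk
    push_cast at h2
    linear_combination h2 * Complex.I
  rw [this, Complex.exp_add, Complex.exp_int_mul_two_pi_mul_I, mul_one]

lemma d_sq (θ : ℝ) (m : ℕ) : (d θ m) ^ 2 = 2 - 2 * Real.cos (ee θ m) := by
  unfold d
  rw [exp_eq, Complex.exp_mul_I, Complex.sq_norm, Complex.normSq_apply]
  simp [Complex.cos_ofReal_re, Complex.sin_ofReal_re, Complex.cos_ofReal_im, Complex.sin_ofReal_im]
  have := Real.sin_sq_add_cos_sq (ee θ m)
  ring_nf
  nlinarith [this]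

lemma d_nonneg (θ : ℝ) (m : ℕ) : 0 ≤ d θ m := norm_nonneg _

noncomputable def nu (θ : ℝ) (m : ℕ) : ℝ := |ee θ m|

lemma nu_nonneg (θ : ℝ) (m : ℕ) : 0 ≤ nu θ m := abs_nonneg _

lemma nu_le_pi (θ : ℝ) (m : ℕ) : nu θ m ≤ π := abs_ee_le θ m

lemma d_sq' (θ : ℝ) (m : ℕ) : (d θ m) ^ 2 = 2 - 2 * Real.cos (nu θ m) := by
  rw [d_sq, nu, Real.cos_abs]

lemma d_lt_d_iff (θ : ℝ) (m₁ m₂ : ℕ) : d θ m₁ < d θ m₂ ↔ nu θ m₁ < nu θ m₂ := by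
  have hsq : d θ m₁ < d θ m₂ ↔ (d θ m₁)^2 < (d θ m₂)^2 := by
    constructor <;> intro h <;> nlinarith [d_nonneg θ m₁, d_nonneg θ m₂]
  have hc : (d θ m₁)^2 < (d θ m₂)^2 ↔ Real.cos (nu θ m₂) < Real.cos (nu θ m₁) := by
    rw [d_sq', d_sq']; constructor <;> intro h <;> linarith
  rw [hsq, hc]
  constructor
  · intro h
    by_contra hle
    push_neg at hle
    rcases eq_or_lt_of_le hle with he | hlt
    · rw [he] at h; exact lt_irrefl _ h
    · exact absurd (Real.strictAntiOn_cos ⟨nu_nonneg θ m₂, nu_le_pi θ m₂⟩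
        ⟨nu_nonneg θ m₁, nu_le_pi θ m₁⟩ hlt) (by linarith)
  · intro h
    exact Real.strictAntiOn_cos ⟨nu_nonneg θ m₁, nu_le_pi θ m₁⟩
      ⟨nu_nonneg θ m₂, nu_le_pi θ m₂⟩ h

lemma d_eq_zero_iff (θ : ℝ) (m : ℕ) : d θ m = 0 ↔ nu θ m = 0 := by
  have hpi := Real.pi_pos
  have hsq : d θ m = 0 ↔ (d θ m)^2 = 0 := by
    constructor <;> intro h <;> nlinarith [d_nonneg θ m]
  rw [hsq, d_sq']
  have hcos : Real.cos (nu θ m) = 1 ↔ nu θ m = 0 := by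
    apply Real.cos_eq_one_iff_of_lt_of_lt
    · nlinarith [nu_nonneg θ m]
    · nlinarith [nu_le_pi θ m]
  constructor
  · intro h; rw [← hcos]; linarith
  · intro h; rw [hcos.2 h]; ring

lemma ee_sub (θ : ℝ) {j k : ℕ} (hjk : j ≤ k) :
    ∃ K : ℤ, ee θ (k - j) = ee θ k - ee θ j + 2 * π * K := by
  obtain ⟨k1, h1⟩ := ee_spec θ (k - j)
  obtain ⟨k2, h2⟩ := ee_spec θ k
  obtain ⟨k3, h3⟩ := ee_spec θ j
  refine ⟨k2 - k3 - k1, ?_⟩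
  have hc : ((k - j : ℕ) : ℝ) = (k : ℝ) - (j : ℝ) := by
    push_cast [Nat.cast_sub hjk]; ring
  push_cast
  rw [hc] at h1
  nlinarith [h1, h2, h3]

lemma nu_sub_le (θ : ℝ) {j k : ℕ} (hjk : j ≤ k) : nu θ (k - j) ≤ |ee θ k - ee θ j| := by
  obtain ⟨K, hK⟩ := ee_sub θ hjk
  have hpi := Real.pi_pos
  by_cases h0 : K = 0
  · have heq : ee θ (k - j) = ee θ k - ee θ j := by rw [hK, h0]; push_cast; ring
    rw [nu, heq]
  · have h1 : (1:ℝ) ≤ |(K:ℝ)| := by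
      rw [← Int.cast_abs]; exact_mod_cast Int.one_le_abs (by exact_mod_cast h0)
    have h2 : |ee θ (k - j)| ≤ π := abs_ee_le θ _
    have h3 : |ee θ k - ee θ j| = |ee θ (k - j) - 2 * π * K| := by rw [hK]; ring_nf
    rw [nu, h3]
    have h4 : |2 * π * (K:ℝ)| = 2 * π * |(K:ℝ)| := by
      rw [abs_mul, abs_of_pos (by linarith : (0:ℝ) < 2 * π)]
    have := abs_sub_abs_le_abs_sub (2 * π * (K:ℝ)) (ee θ (k - j))
    have h5 : |2 * π * (K:ℝ) - ee θ (k-j)| = |ee θ (k-j) - 2 * π * K| := abs_sub_comm _ _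
    nlinarith

lemma ee_eq_of_nu_sub (θ : ℝ) {j k : ℕ} (hjk : j ≤ k) (h : nu θ (k - j) = 0) :
    ee θ k = ee θ j := by
  obtain ⟨K, hK⟩ := ee_sub θ hjk
  have hpi := Real.pi_pos
  have h0 : ee θ (k - j) = 0 := by rwa [nu, abs_eq_zero] at h
  rw [h0] at hK
  have hjm := ee_mem θ j
  have hkm := ee_mem θ k
  simp only [Set.mem_Ico] at hjm hkm
  have hK0 : K = 0 := by
    by_contra hne
    have h1 : (1:ℝ) ≤ |(K:ℝ)| := by
      rw [← Int.cast_abs]; exact_mod_cast Int.one_le_abs (by exact_mod_cast hne)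
    rcases abs_cases ((K:ℝ)) with ⟨he, _⟩ | ⟨he, _⟩ <;> nlinarith
  rw [hK0] at hK; push_cast at hK; linarith

def IsRec (θ : ℝ) (r : ℕ) : Prop :=
  d θ r ≠ 0 ∧ ∀ m, 1 ≤ m → m < r → d θ m ≠ 0 → d θ r < d θ m

lemma sign_helper {x y : ℝ} (h1 : |y| < |x|) (h2 : |x| < |y - x|) : x * y < 0 := by
  rcases abs_cases x with ⟨ex, _⟩ | ⟨ex, _⟩ <;>
    rcases abs_cases y with ⟨ey, _⟩ | ⟨ey, _⟩ <;>
      rcases abs_cases (y - x) with ⟨ed, _⟩ | ⟨ed, _⟩ <;> nlinarith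

lemma opp (θ : ℝ) {p q : ℕ} (hp : IsRec θ p) (hq : IsRec θ q) (h1 : 1 ≤ p)
    (hpq : p < q) (h2q : q < 2 * p) : ee θ p * ee θ q < 0 := by
  have hdq : d θ q < d θ p := hq.2 p h1 hpq hp.1
  have hnq : nu θ q < nu θ p := (d_lt_d_iff θ q p).1 hdq
  have hm1 : 1 ≤ q - p := by omega
  have hmp : q - p < p := by omega
  by_cases h0 : d θ (q - p) = 0
  · have h00 : nu θ (q - p) = 0 := (d_eq_zero_iff θ _).1 h0
    have := ee_eq_of_nu_sub θ hpq.le h00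
    rw [nu, nu, this] at hnq
    exact absurd hnq (lt_irrefl _)
  · have hda : d θ p < d θ (q - p) := hp.2 _ hm1 hmp h0
    have hna : nu θ p < nu θ (q - p) := (d_lt_d_iff θ p _).1 hda
    have hle := nu_sub_le θ hpq.le
    exact sign_helper (by rw [nu, nu] at hnq; exact hnq)
      (by rw [nu] at hna; linarith [hle, hna])

lemma core (θ : ℝ) {n a b c : ℕ} (ha : IsRec θ a) (hb : IsRec θ b) (hc : IsRec θ c)
    (h1a : 1 ≤ a) (hab : a < b) (hbc : b < c) (hcn : c ≤ n) (hn : n < 2 * a) : False := by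
  have pab := opp θ ha hb h1a hab (by omega)
  have pbc := opp θ hb hc (by omega) hbc (by omega)
  have pac : 0 < ee θ a * ee θ c := by
    nlinarith [mul_pos_of_neg_of_neg pab pbc, sq_nonneg (ee θ b)]
  have hnc : nu θ c < nu θ a := (d_lt_d_iff θ c a).1 (hc.2 a h1a (by omega) ha.1)
  have hac : a ≤ c := by omega
  have hm1 : 1 ≤ c - a := by omega
  have hma : c - a < a := by omega
  by_cases h0 : d θ (c - a) = 0
  · have h00 : nu θ (c - a) = 0 := (d_eq_zero_iff θ _).1 h0
    have := ee_eq_of_nu_sub θ hac h00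
    rw [nu, nu, this] at hnc
    exact absurd hnc (lt_irrefl _)
  · have hda : d θ a < d θ (c - a) := ha.2 _ hm1 hma h0
    have hna : nu θ a < nu θ (c - a) := (d_lt_d_iff θ a _).1 hda
    have hle := nu_sub_le θ hac
    have := sign_helper (x := ee θ a) (y := ee θ c)
      (by rw [nu, nu] at hnc; exact hnc)
      (by rw [nu] at hna; linarith [hle, hna])
    linarith

def Dset (θ : ℝ) (t : ℕ) : Set ℝ := d θ '' {m : ℕ | 1 ≤ m ∧ m ≤ t ∧ d θ m ≠ 0}

noncomputable def F (θ : ℝ) (t : ℕ) : ℝ := sInf (Dset θ t)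

lemma Dset_finite (θ : ℝ) (t : ℕ) : (Dset θ t).Finite := by
  apply Set.Finite.image
  apply (Set.finite_Icc 1 t).subset
  intro m hm
  exact Set.mem_Icc.2 ⟨hm.1, hm.2.1⟩

lemma Dset_mono (θ : ℝ) {s t : ℕ} (hst : s ≤ t) : Dset θ s ⊆ Dset θ t := by
  rintro x ⟨m, ⟨h1, h2, h3⟩, rfl⟩
  exact ⟨m, ⟨h1, h2.trans hst, h3⟩, rfl⟩

lemma F_mem (θ : ℝ) {t : ℕ} (h : (Dset θ t).Nonempty) : F θ t ∈ Dset θ t :=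
  h.csInf_mem (Dset_finite θ t)

lemma F_le (θ : ℝ) {t : ℕ} {x : ℝ} (hx : x ∈ Dset θ t) : F θ t ≤ x :=
  csInf_le (Dset_finite θ t).bddBelow hx

lemma F_anti (θ : ℝ) {s t : ℕ} (h : (Dset θ s).Nonempty) (hst : s ≤ t) : F θ t ≤ F θ s :=
  csInf_le_csInf (Dset_finite θ t).bddBelow h (Dset_mono θ hst)

lemma rec_of_drop (θ : ℝ) {u : ℕ} (hu : 1 ≤ u) (hne : (Dset θ (u - 1)).Nonempty)
    (hdrop : F θ u < F θ (u - 1)) : IsRec θ u := by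
  have hneu : (Dset θ u).Nonempty := hne.mono (Dset_mono θ (by omega))
  obtain ⟨m₀, ⟨hm1, hm2, hm3⟩, hm0⟩ := F_mem θ hneu
  have hm0u : m₀ = u := by
    by_contra hne'
    have : m₀ ≤ u - 1 := by omega
    have : d θ m₀ ∈ Dset θ (u - 1) := ⟨m₀, ⟨hm1, this, hm3⟩, rfl⟩
    have := F_le θ this
    rw [hm0] at this
    linarith
  rw [hm0u] at hm0 hm3
  refine ⟨hm3, fun m h1 h2 h3 => ?_⟩
  have hmem : d θ m ∈ Dset θ (u - 1) := ⟨m, ⟨h1, by omega, h3⟩, rfl⟩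
  have := F_le θ hmem
  rw [hm0]
  linarith

lemma R_encard_le_two (θ : ℝ) (n : ℕ) (hne : (Dset θ (n - n / 2)).Nonempty) :
    {u : ℕ | n - n / 2 < u ∧ u ≤ n ∧ F θ u < F θ (u - 1)}.encard ≤ 2 := by
  set l := n - n / 2 with hl
  set R := {u : ℕ | l < u ∧ u ≤ n ∧ F θ u < F θ (u - 1)} with hR
  have hRec : ∀ u ∈ R, IsRec θ u := by
    intro u hu
    obtain ⟨h1, h2, h3⟩ := hu
    exact rec_of_drop θ (by omega) (hne.mono (Dset_mono θ (by omega))) h3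
  have tri : ∀ x y z : ℕ, x ∈ R → y ∈ R → z ∈ R → x < y → y < z → False := by
    intro x y z hx hy hz hxy hyz
    have hx1 := hx.1
    rw [hl] at hx1
    exact core θ (n := n) (hRec x hx) (hRec y hy) (hRec z hz) (by omega) hxy hyz
      hz.2.1 (by omega)
  by_contra h
  push_neg at h
  have h1 : 1 < R.encard := lt_trans (by norm_num) h
  obtain ⟨a, b, ha, hb, hab⟩ := Set.one_lt_encard_iff.1 h1
  have hsub : ¬ R ⊆ {a, b} := by
    intro hs
    have := (Set.encard_mono hs).trans_eq (Set.encard_pair hab)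
    exact absurd this (not_le.2 h)
  obtain ⟨c, hc, hcnot⟩ := Set.not_subset.1 hsub
  simp only [Set.mem_insert_iff, Set.mem_singleton_iff, not_or] at hcnot
  obtain ⟨hca, hcb⟩ := hcnot
  rcases Nat.lt_trichotomy a b with h1' | h1' | h1'
  · rcases Nat.lt_trichotomy c a with g | g | g
    · exact tri c a b hc ha hb g h1'
    · exact hca g
    · rcases Nat.lt_trichotomy c b with f | f | f
      · exact tri a c b ha hc hb g f
      · exact hcb f
      · exact tri a b c ha hb hc h1' f
  · exact hab h1'
  · rcases Nat.lt_trichotomy c b with g | g | g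
    · exact tri c b a hc hb ha g h1'
    · exact hcb g
    · rcases Nat.lt_trichotomy c a with f | f | f
      · exact tri b c a hb hc ha g f
      · exact hca f
      · exact tri b a c hb ha hc h1' f

lemma coverage (θ : ℝ) {n : ℕ} (hne : (Dset θ (n - n / 2)).Nonempty) :
    ∀ t, n - n / 2 ≤ t → t ≤ n → F θ t ∈
      insert (F θ (n - n / 2))
        (F θ '' {u : ℕ | n - n / 2 < u ∧ u ≤ n ∧ F θ u < F θ (u - 1)}) := by
  set l := n - n / 2 with hl
  intro t hlt
  induction t, hlt using Nat.le_induction with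
  | base => intro _; exact Set.mem_insert _ _
  | succ t ht IH =>
    intro htn1
    by_cases hd : F θ (t + 1) < F θ (t + 1 - 1)
    · exact Set.mem_insert_of_mem _ ⟨t + 1, ⟨by omega, htn1, hd⟩, rfl⟩
    · have hstep : F θ (t + 1) = F θ t := by
        have h1 : F θ (t + 1) ≤ F θ t := F_anti θ (hne.mono (Dset_mono θ ht)) (by omega)
        have h2 : ¬ F θ (t + 1) < F θ t := by simpa using hd
        linarith [not_lt.1 h2]
      rw [hstep]
      exact IH (by omega)

end ThreeGapAux

/-- The nearest neighbor distance of `x` in `X`. -/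
noncomputable def nnd {M : Type*} [MetricSpace M] (x : M) (X : Set M) : ℝ :=
  sInf (dist x '' (X \ {x}))

/-- The set of nearest neighbor distances of a set `X`. -/
noncomputable def NND {M : Type*} [MetricSpace M] (X : Set M) : Set ℝ :=
  (fun x => nnd x X) '' X

/-- Three Gap Theorem on the unit circle in `ℂ` with the chordal (Euclidean) metric:
for a point `z` with `|z| = 1`, the rotated points `{e^{ikθ} z : k = 0, …, n}`, if at
least two are distinct, realize at most three distinct nearest neighbor distances. -/
theorem three_gap_unit_circle (z : ℂ) (hz : ‖z‖ = 1) (θ : ℝ) (n : ℕ)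
    (X : Set ℂ)
    (hX : X = {w | ∃ k : ℕ, k ≤ n ∧ w = Complex.exp ((k : ℂ) * θ * Complex.I) * z})
    (h2 : X.Nontrivial) :
    (NND X).encard ≤ 3 := by
  classical
  open ThreeGapAux in
  set l := n - n / 2 with hl
  set x : ℕ → ℂ := fun k => Complex.exp ((k : ℂ) * θ * Complex.I) * z with hxdef
  have hxk : ∀ k : ℕ, x k = Complex.exp ((k : ℂ) * θ * Complex.I) * z := fun _ => rfl
  have hmemX : ∀ k, k ≤ n → x k ∈ X := by
    intro k hk; rw [hX]; exact ⟨k, hk, rfl⟩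
  have hdist : ∀ j k : ℕ, j ≤ k → dist (x k) (x j) = ThreeGapAux.d θ (k - j) := by
    intro j k hjk
    have hsplit : x k - x j =
        Complex.exp ((j : ℂ) * θ * Complex.I) * z *
          (Complex.exp (((k - j : ℕ) : ℂ) * θ * Complex.I) - 1) := by
      have hkc : ((k : ℂ) * θ * Complex.I) =
          ((j : ℂ) * θ * Complex.I) + (((k - j : ℕ) : ℂ) * θ * Complex.I) := by
        push_cast [Nat.cast_sub hjk]; ring
      rw [hxk, hxk, hkc, Complex.exp_add]; ring
    rw [Complex.dist_eq, hsplit, norm_mul, norm_mul, Complex.norm_exp, hz]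
    have : ((j : ℂ) * θ * Complex.I).re = 0 := by simp
    rw [this, Real.exp_zero]
    unfold ThreeGapAux.d
    ring
  have hne_iff : ∀ j k : ℕ, j ≤ k → (x j ≠ x k ↔ ThreeGapAux.d θ (k - j) ≠ 0) := by
    intro j k hjk
    rw [← hdist j k hjk, dist_ne_zero]
    exact ⟨Ne.symm, Ne.symm⟩
  have hDset0 : (ThreeGapAux.Dset θ l).Nonempty := by
    obtain ⟨w, hw, hwne⟩ := h2.exists_ne (x (n / 2))
    rw [hX] at hw
    obtain ⟨j, hj, rfl⟩ := hw
    rw [← hxk j] at hwne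
    rcases Nat.le_total j (n / 2) with hje | hje
    · refine ⟨ThreeGapAux.d θ (n / 2 - j), n / 2 - j, ⟨?_, by omega, ?_⟩, rfl⟩
      · have : j ≠ n / 2 := fun h => hwne (by rw [h])
        omega
      · exact (hne_iff j (n / 2) hje).1 hwne
    · refine ⟨ThreeGapAux.d θ (j - n / 2), j - n / 2, ⟨?_, by omega, ?_⟩, rfl⟩
      · have : j ≠ n / 2 := fun h => hwne (by rw [h])
        omega
      · exact (hne_iff (n / 2) j hje).1 (Ne.symm hwne)
  have hnnd : ∀ k, k ≤ n → nnd (x k) X = ThreeGapAux.F θ (max k (n - k)) := by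
    intro k hk
    unfold nnd ThreeGapAux.F
    congr 1
    ext r
    constructor
    · rintro ⟨w, ⟨hwX, hwne⟩, rfl⟩
      rw [Set.mem_singleton_iff] at hwne
      rw [hX] at hwX
      obtain ⟨j, hj, rfl⟩ := hwX
      rw [← hxk j] at hwne ⊢
      rcases Nat.le_total j k with hjk | hjk
      · rw [hdist j k hjk]
        refine ⟨k - j, ⟨?_, ?_, (hne_iff j k hjk).1 hwne⟩, rfl⟩
        · have : j ≠ k := fun h => hwne (by rw [h])
          omega
        · exact le_trans (by omega) (le_max_left k (n - k))
      · rw [dist_comm, hdist k j hjk]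
        refine ⟨j - k, ⟨?_, ?_, (hne_iff k j hjk).1 (Ne.symm hwne)⟩, rfl⟩
        · have : j ≠ k := fun h => hwne (by rw [h])
          omega
        · exact le_trans (by omega) (le_max_right k (n - k))
    · rintro ⟨m, ⟨h1, h2', h3⟩, rfl⟩
      rcases le_or_gt m k with hmk | hmk
      · have hjn : k - m ≤ n := by omega
        have hd : ThreeGapAux.d θ (k - (k - m)) = ThreeGapAux.d θ m := by
          congr 1; omega
        have hne : x (k - m) ≠ x k := (hne_iff (k - m) k (by omega)).2 (by rw [hd]; exact h3)
        refine ⟨x (k - m), ⟨hmemX _ hjn, ?_⟩, ?_⟩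
        · rw [Set.mem_singleton_iff]; exact hne
        · rw [hdist (k - m) k (by omega), hd]
      · have hmn : m ≤ n - k := by
          rcases Nat.le_total (n - k) k with hmx | hmx
          · rw [max_eq_left hmx] at h2'; omega
          · rw [max_eq_right hmx] at h2'; exact h2'
        have hjn : k + m ≤ n := by omega
        have hd : ThreeGapAux.d θ (k + m - k) = ThreeGapAux.d θ m := by
          congr 1; omega
        have hne : x (k + m) ≠ x k := by
          have := (hne_iff k (k + m) (by omega)).2 (by rw [hd]; exact h3)
          exact this.symm
        refine ⟨x (k + m), ⟨hmemX _ hjn, ?_⟩, ?_⟩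
        · rw [Set.mem_singleton_iff]; exact hne
        · rw [dist_comm, hdist k (k + m) (by omega), hd]
  have hcov := ThreeGapAux.coverage θ (n := n) hDset0
  have hsubset : NND X ⊆
      insert (ThreeGapAux.F θ l)
        (ThreeGapAux.F θ '' {u : ℕ | l < u ∧ u ≤ n ∧ ThreeGapAux.F θ u < ThreeGapAux.F θ (u - 1)}) := by
    rintro r ⟨w, hwX, rfl⟩
    rw [hX] at hwX
    obtain ⟨k, hk, rfl⟩ := hwX
    have hbeta : (fun x => nnd x X) (Complex.exp ((k : ℂ) * θ * Complex.I) * z) = nnd (x k) X := rfl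
    rw [hbeta, hnnd k hk]
    have h1 : l ≤ max k (n - k) := by
      rcases Nat.le_total k (n - k) with h | h
      · rw [max_eq_right h]; omega
      · rw [max_eq_left h]; omega
    have h2'' : max k (n - k) ≤ n := by
      rcases Nat.le_total k (n - k) with h | h
      · rw [max_eq_right h]; omega
      · rw [max_eq_left h]; omega
    exact hcov (max k (n - k)) h1 h2''
  calc (NND X).encard ≤ _ := Set.encard_mono hsubset
    _ ≤ _ + 1 := Set.encard_insert_le _ _
    _ ≤ (2 : ℕ∞) + 1 := by
        apply add_le_add_left
        exact le_trans (Set.encard_image_le _ _) (ThreeGapAux.R_encard_le_two θ n hDset0)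
    _ = 3 := by norm_num
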